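/- If f is a nonzero polynomial in two complex variables whose Newton polygon Δ contains more than one point, then the amoeba 𝒜 of f is an unbounded subset of ℝ². -/

import Mathlib

open MeasureTheory

/-- Evaluation of a polynomial in two variables at `(z₁, z₂)`. -/
noncomputable def mvEval (f : MvPolynomial (Fin 2) ℂ) (z₁ z₂ : ℂ) : ℂ :=
  MvPolynomial.eval (fun i : Fin 2 => if i = 0 then z₁ else z₂) f

/-- The zero set of `f` in the torus `(ℂ∖{0})²`. -/
def torusZeroSet (f : MvPolynomial (Fin 2) ℂ) : Set (ℂ × ℂ) :=
  {z | z.1 ≠ 0 ∧ z.2 ≠ 0 ∧ mvEval f z.1 z.2 = 0}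

/-- The map `Log : (z₁, z₂) ↦ (log |z₁|, log |z₂|)`. -/
noncomputable def amoebaLog (z : ℂ × ℂ) : ℝ × ℝ :=
  (Real.log ‖z.1‖, Real.log ‖z.2‖)

/-- The amoeba of `f`: the image of its toric zero set under `Log`. -/
noncomputable def amoeba (f : MvPolynomial (Fin 2) ℂ) : Set (ℝ × ℝ) :=
  amoebaLog '' torusZeroSet f

/-- The Newton polygon of `f`: the convex hull of the exponent vectors of the
monomials appearing in `f` with nonzero coefficient. -/
noncomputable def newtonPolygon (f : MvPolynomial (Fin 2) ℂ) : Set (ℝ × ℝ) :=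
  convexHull ℝ ((fun d : Fin 2 →₀ ℕ => ((d 0 : ℝ), (d 1 : ℝ))) '' (f.support : Set (Fin 2 →₀ ℕ)))


/-- A complex polynomial with two nonzero coefficients at distinct degrees has a nonzero root. -/
lemma aux_exists_root_ne_zero (g : Polynomial ℂ) {n₁ n₂ : ℕ}
    (h1 : g.coeff n₁ ≠ 0) (h2 : g.coeff n₂ ≠ 0) (hne : n₁ ≠ n₂) :
    ∃ z : ℂ, z ≠ 0 ∧ g.eval z = 0 := by
  by_contra h
  push_neg at h
  have hg : g ≠ 0 := fun h0 => h1 (by simp [h0])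
  have hsplit : g.Splits := IsAlgClosed.splits g
  have hprod := hsplit.eq_prod_roots
  have hroots : ∀ a ∈ g.roots, a = 0 := by
    intro a ha
    by_contra ha0
    exact h a ha0 (Polynomial.isRoot_of_mem_roots ha)
  have hrepl : g.roots.map (fun a => Polynomial.X - Polynomial.C a)
      = Multiset.replicate (Multiset.card g.roots) Polynomial.X := by
    rw [Multiset.eq_replicate]
    refine ⟨by simp, ?_⟩
    intro b hb
    obtain ⟨a, ha, rfl⟩ := Multiset.mem_map.mp hb
    rw [hroots a ha]; simp
  rw [hrepl, Multiset.prod_replicate] at hprod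
  set m := Multiset.card g.roots with hm
  have hc1 : g.coeff n₁ = if n₁ = m then g.leadingCoeff else 0 := by
    conv_lhs => rw [hprod]
    simp [Polynomial.coeff_C_mul, Polynomial.coeff_X_pow]
  have hc2 : g.coeff n₂ = if n₂ = m then g.leadingCoeff else 0 := by
    conv_lhs => rw [hprod]
    simp [Polynomial.coeff_C_mul, Polynomial.coeff_X_pow]
  by_cases h1m : n₁ = m
  · have h2m : n₂ ≠ m := fun h' => hne (h1m ▸ h'.symm ▸ rfl)
    rw [if_neg h2m] at hc2
    exact h2 hc2
  · rw [if_neg h1m] at hc1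
    exact h1 hc1

/-- Key construction: given two support elements differing in coordinate `k`,
for any `r` there is a zero of `f` on the torus whose `k'`-coordinate has
large log-modulus. -/
lemma aux_exists_torus_zero (f : MvPolynomial (Fin 2) ℂ)
    (d e : Fin 2 →₀ ℕ) (hd : d ∈ f.support) (he : e ∈ f.support)
    (k k' : Fin 2) (hkk' : k ≠ k') (hcover : ∀ i : Fin 2, i = k ∨ i = k')
    (hdk : d k ≠ e k) (r : ℝ) :
    ∃ v : Fin 2 → ℂ, (∀ i, v i ≠ 0) ∧ MvPolynomial.eval v f = 0 ∧
      r < Real.log (‖v k'‖) := by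
  classical
  -- the coefficient polynomials in the parameter variable
  set P : ℕ → Polynomial ℂ := fun n =>
    ∑ a ∈ f.support.filter (fun a => a k = n),
      Polynomial.C (f.coeff a) * Polynomial.X ^ (a k') with hP
  have hcoeffP : ∀ a ∈ f.support, (P (a k)).coeff (a k') = f.coeff a := by
    intro a ha
    rw [hP]
    rw [Polynomial.finset_sum_coeff]
    have hamem : a ∈ f.support.filter (fun b : Fin 2 →₀ ℕ => b k = a k) :=
      Finset.mem_filter.mpr ⟨ha, rfl⟩
    rw [Finset.sum_eq_single_of_mem a hamem]
    · simp [Polynomial.coeff_C_mul, Polynomial.coeff_X_pow]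
    · intro b hb hba
      rw [Finset.mem_filter] at hb
      simp only [Polynomial.coeff_C_mul, Polynomial.coeff_X_pow, mul_ite, mul_one, mul_zero]
      rw [if_neg]
      intro hbk'
      apply hba
      ext i
      rcases hcover i with h | h
      · rw [h, hb.2]
      · rw [h, hbk']
  have hPd : P (d k) ≠ 0 := fun h0 => by
    have := hcoeffP d hd
    rw [h0] at this
    simp at this
    exact (MvPolynomial.mem_support_iff.mp hd) this.symm
  have hPe : P (e k) ≠ 0 := fun h0 => by
    have := hcoeffP e he
    rw [h0] at this
    simp at this
    exact (MvPolynomial.mem_support_iff.mp he) this.symm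
  -- choose a large real parameter avoiding roots of P (d k) * P (e k)
  have hQ : P (d k) * P (e k) ≠ 0 := mul_ne_zero hPd hPe
  have hfin : Set.Finite {t : ℝ | (P (d k) * P (e k)).eval (t : ℂ) = 0} := by
    have : {t : ℝ | (P (d k) * P (e k)).eval (t : ℂ) = 0}
        = ((↑) : ℝ → ℂ) ⁻¹' {z : ℂ | (P (d k) * P (e k)).IsRoot z} := rfl
    rw [this]
    exact Set.Finite.preimage (Function.Injective.injOn Complex.ofReal_injective)
      (Polynomial.finite_setOf_isRoot hQ)
  have hIoi : (Set.Ioi (max 1 (Real.exp r))).Infinite := Set.Ioi_infinite _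
  obtain ⟨t, ht⟩ := (hIoi.diff hfin).nonempty
  obtain ⟨htIoi, htbad⟩ := ht
  have ht1 : (1 : ℝ) < t := lt_of_le_of_lt (le_max_left _ _) htIoi
  have ht0 : (0 : ℝ) < t := lt_trans one_pos ht1
  have htr : r < Real.log t := (Real.lt_log_iff_exp_lt ht0).mpr
    (lt_of_le_of_lt (le_max_right _ _) htIoi)
  set w : ℂ := (t : ℂ) with hw
  have hw0 : w ≠ 0 := by
    simp [hw, Complex.ofReal_eq_zero]
    exact ne_of_gt ht0
  have hPdw : (P (d k)).eval w ≠ 0 := by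
    intro h0
    apply htbad
    simp only [Set.mem_setOf_eq, Polynomial.eval_mul]
    rw [← hw, h0, zero_mul]
  have hPew : (P (e k)).eval w ≠ 0 := by
    intro h0
    apply htbad
    simp only [Set.mem_setOf_eq, Polynomial.eval_mul]
    rw [← hw, h0, mul_zero]
  -- the one-variable polynomial f(·, w)
  set g : Polynomial ℂ :=
    ∑ a ∈ f.support, Polynomial.C (f.coeff a * w ^ (a k')) * Polynomial.X ^ (a k) with hg
  have hgcoeff : ∀ n : ℕ, g.coeff n = (P n).eval w := by
    intro n
    rw [hg, Polynomial.finset_sum_coeff, hP]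
    rw [Polynomial.eval_finset_sum]
    calc ∑ a ∈ f.support, (Polynomial.C (f.coeff a * w ^ (a k')) * Polynomial.X ^ (a k)).coeff n
        = ∑ a ∈ f.support, if a k = n then f.coeff a * w ^ (a k') else 0 := by
          apply Finset.sum_congr rfl
          intro a _
          rw [Polynomial.coeff_C_mul, Polynomial.coeff_X_pow]
          rcases eq_or_ne (a k) n with h | h
          · simp [h]
          · simp [h, Ne.symm h]
      _ = ∑ a ∈ f.support.filter (fun a => a k = n), f.coeff a * w ^ (a k') :=
          (Finset.sum_filter _ _).symm
      _ = ∑ a ∈ f.support.filter (fun a => a k = n),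
            Polynomial.eval w (Polynomial.C (f.coeff a) * Polynomial.X ^ (a k')) := by
          simp
  obtain ⟨z, hz0, hzroot⟩ := aux_exists_root_ne_zero g
    (n₁ := d k) (n₂ := e k)
    (by rw [hgcoeff]; exact hPdw) (by rw [hgcoeff]; exact hPew) hdk
  refine ⟨fun i => if i = k then z else w, ?_, ?_, ?_⟩
  · intro i
    by_cases hik : i = k <;> simp [hik, hz0, hw0]
  · rw [MvPolynomial.eval_eq']
    have huniv : (Finset.univ : Finset (Fin 2)) = {k, k'} := by
      ext i
      simp only [Finset.mem_univ, Finset.mem_insert, Finset.mem_singleton, true_iff]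
      exact hcover i
    have heval : ∀ a : Fin 2 →₀ ℕ,
        (∏ i : Fin 2, (if i = k then z else w) ^ (a i)) = z ^ (a k) * w ^ (a k') := by
      intro a
      rw [huniv, Finset.prod_pair hkk']
      simp [hkk'.symm]
    calc ∑ a ∈ f.support, f.coeff a * ∏ i : Fin 2, (if i = k then z else w) ^ (a i)
        = ∑ a ∈ f.support, (f.coeff a * w ^ (a k')) * z ^ (a k) := by
          apply Finset.sum_congr rfl
          intro a _
          rw [heval a]; ring
      _ = g.eval z := by
          rw [hg, Polynomial.eval_finset_sum]
          simp
      _ = 0 := hzroot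
  · simp only [if_neg hkk'.symm]
    rw [hw]
    rw [Complex.norm_real, Real.norm_eq_abs, abs_of_pos ht0]
    exact htr

/-- If the Newton polygon of a nonzero polynomial contains more than one
point, then its amoeba is unbounded. -/
theorem amoeba_unbounded (f : MvPolynomial (Fin 2) ℂ) (hf : f ≠ 0)
    (hΔ : ∃ p ∈ newtonPolygon f, ∃ q ∈ newtonPolygon f, p ≠ q) :
    ¬ Bornology.IsBounded (amoeba f) := by
  classical
  obtain ⟨p, hp, q, hq, hpq⟩ := hΔ
  set S : Set (ℝ × ℝ) :=
    (fun d : Fin 2 →₀ ℕ => ((d 0 : ℝ), (d 1 : ℝ))) '' (f.support : Set (Fin 2 →₀ ℕ)) with hS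
  have hSnot : ¬ S.Subsingleton := by
    intro hsub
    rcases Set.Subsingleton.eq_empty_or_singleton hsub with h | ⟨x, h⟩
    · rw [newtonPolygon, ← hS, h, convexHull_empty] at hp
      exact hp
    · rw [newtonPolygon, ← hS, h, convexHull_singleton] at hp hq
      rw [Set.mem_singleton_iff] at hp hq
      exact hpq (hp.trans hq.symm)
  rw [Set.not_subsingleton_iff] at hSnot
  obtain ⟨a, ha, b, hb, hab⟩ := hSnot
  obtain ⟨dd, hdd, rfl⟩ := ha
  obtain ⟨ee, hee, rfl⟩ := hb
  have hdds : dd ∈ f.support := hdd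
  have hees : ee ∈ f.support := hee
  have hcases : dd 0 ≠ ee 0 ∨ dd 1 ≠ ee 1 := by
    by_contra h
    push_neg at h
    exact hab (by simp [Prod.ext_iff, h.1, h.2])
  intro hbound
  obtain ⟨C, hC⟩ := isBounded_iff_forall_norm_le.mp hbound
  rcases hcases with hk | hk
  · obtain ⟨v, hv0, hveval, hvlog⟩ :=
      aux_exists_torus_zero f dd ee hdds hees 0 1 (by decide) (by decide) hk C
    have hmem : (v 0, v 1) ∈ torusZeroSet f := by
      refine ⟨hv0 0, hv0 1, ?_⟩
      rw [mvEval]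
      have hfun : (fun i : Fin 2 => if i = 0 then v 0 else v 1) = v := by
        funext i; fin_cases i <;> simp
      rw [hfun, hveval]
    have hamo : amoebaLog (v 0, v 1) ∈ amoeba f := Set.mem_image_of_mem _ hmem
    have hnormle := hC _ hamo
    have hle : Real.log (‖v 1‖) ≤ ‖amoebaLog (v 0, v 1)‖ := by
      rw [amoebaLog, Prod.norm_def]
      calc Real.log (‖v 1‖)
          ≤ |Real.log (‖v 1‖)| := le_abs_self _
        _ ≤ max ‖Real.log (‖v 0‖)‖ ‖Real.log (‖v 1‖)‖ := by
            rw [Real.norm_eq_abs, Real.norm_eq_abs]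
            exact le_max_right _ _
    linarith
  · obtain ⟨v, hv0, hveval, hvlog⟩ :=
      aux_exists_torus_zero f dd ee hdds hees 1 0 (by decide) (by decide) hk C
    have hmem : (v 0, v 1) ∈ torusZeroSet f := by
      refine ⟨hv0 0, hv0 1, ?_⟩
      rw [mvEval]
      have hfun : (fun i : Fin 2 => if i = 0 then v 0 else v 1) = v := by
        funext i; fin_cases i <;> simp
      rw [hfun, hveval]
    have hamo : amoebaLog (v 0, v 1) ∈ amoeba f := Set.mem_image_of_mem _ hmem
    have hnormle := hC _ hamo
    have hle : Real.log (‖v 0‖) ≤ ‖amoebaLog (v 0, v 1)‖ := by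
      rw [amoebaLog, Prod.norm_def]
      calc Real.log (‖v 0‖)
          ≤ |Real.log (‖v 0‖)| := le_abs_self _
        _ ≤ max ‖Real.log (‖v 0‖)‖ ‖Real.log (‖v 1‖)‖ := by
            rw [Real.norm_eq_abs, Real.norm_eq_abs]
            exact le_max_left _ _
    linarith
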